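/- arXiv:1605.07421 — 2 statements merged into one kernel-verified Lean document; each statement's English description precedes it below -/
import Mathlib

section
/- Let H be a real Hilbert space, let A, B ⊆ H be nonempty closed convex sets, let α, β ∈ (0, 1), let q ∈ H, and let x₀ ∈ H. Define x_{n+1} = T_{A−q,B−q,α,β}(x_n) for n ≥ 0. Suppose that either H is finite-dimensional, or the interior of A is nonempty, or the interior of B is nonempty. Then the sequence (x_n − x_{n+1}) converges in norm to 2αβ v, where v is the projection of 0 onto the closure of the Minkowski difference A − B = {a − b : a ∈ A, b ∈ B}. -/
open RealInnerProductSpace Pointwise Filter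

section helpers
variable {H : Type*} [NormedAddCommGroup H] [InnerProductSpace ℝ H]

/-- `p` is the projection of `x` onto `C`, characterized variationally. -/
def IsProjPt (C : Set H) (x p : H) : Prop :=
  p ∈ C ∧ ∀ c ∈ C, ⟪x - p, c - p⟫ ≤ 0

lemma isProjPt_of_min {C : Set H} (hC : Convex ℝ C) {x p : H} (hp : p ∈ C)
    (hmin : ∀ c ∈ C, ‖x - p‖ ≤ ‖x - c‖) : IsProjPt C x p := by
  refine ⟨hp, fun c hc => ?_⟩
  by_contra hcon
  push_neg at hcon
  set I : ℝ := ⟪x - p, c - p⟫ with hI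
  have hcp : (0:ℝ) < ‖c - p‖^2 := by
    rcases eq_or_ne c p with rfl | hne
    · simp [hI] at hcon
    · have h0 : c - p ≠ 0 := sub_ne_zero.2 hne
      exact pow_pos (norm_pos_iff.mpr h0) 2
  set t : ℝ := min 1 (I / ‖c - p‖^2) with ht
  have ht0 : 0 < t := lt_min one_pos (div_pos hcon hcp)
  have ht1 : t ≤ 1 := min_le_left _ _
  have hmem : (1 - t) • p + t • c ∈ C := hC hp hc (by linarith) (le_of_lt ht0) (by ring)
  have hle := hmin _ hmem
  have hxe : x - ((1 - t) • p + t • c) = (x - p) - t • (c - p) := by module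
  have hsq : ‖x - ((1-t) • p + t • c)‖^2 = ‖x - p‖^2 - 2*t*I + t^2 * ‖c - p‖^2 := by
    rw [hxe, norm_sub_sq_real, real_inner_smul_right, norm_smul]
    simp [mul_pow, hI]
    ring
  have h1 : ‖x - p‖^2 ≤ ‖x - ((1-t) • p + t • c)‖^2 := by
    have h0 : (0:ℝ) ≤ ‖x - ((1-t) • p + t • c)‖ := norm_nonneg _
    nlinarith [norm_nonneg (x - p)]
  have ht2 : t * ‖c - p‖^2 ≤ I := by
    have : t ≤ I / ‖c - p‖^2 := min_le_right _ _
    calc t * ‖c - p‖^2 ≤ (I / ‖c-p‖^2) * ‖c - p‖^2 := by nlinarith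
    _ = I := by rw [div_mul_cancel₀ _ (ne_of_gt hcp)]
  nlinarith

lemma IsProjPt.unique {C : Set H} {x p p' : H} (h : IsProjPt C x p) (h' : IsProjPt C x p') :
    p = p' := by
  have h1 := h.2 p' h'.1
  have h2 := h'.2 p h.1
  have key : ‖p - p'‖^2 ≤ 0 := by
    have e : ‖p - p'‖^2 = ⟪x - p, p' - p⟫ + ⟪x - p', p - p'⟫ := by
      simp only [← real_inner_self_eq_norm_sq, inner_sub_left, inner_sub_right]
      linarith [real_inner_comm p p']
    linarith
  have := norm_nonneg (p - p')
  have : ‖p - p'‖ = 0 := by nlinarith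
  have := norm_sub_eq_zero_iff.mp this
  exact this

lemma IsProjPt.min {C : Set H} {x p : H} (h : IsProjPt C x p) :
    ∀ c ∈ C, ‖x - p‖ ≤ ‖x - c‖ := by
  intro c hc
  have h1 := h.2 c hc
  have e : ‖x - c‖^2 = ‖x - p‖^2 - 2 * ⟪x - p, c - p⟫ + ‖c - p‖^2 := by
    have : x - c = (x - p) - (c - p) := by module
    rw [this, norm_sub_sq_real]
  nlinarith [norm_nonneg (x - c), norm_nonneg (x - p), sq_nonneg ‖c - p‖]

lemma exists_isProjPt {C : Set H} [CompleteSpace H] (hne : C.Nonempty) (hc : IsClosed C)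
    (hconv : Convex ℝ C) (x : H) : ∃ p, IsProjPt C x p := by
  obtain ⟨p, hp, hmin⟩ := exists_norm_eq_iInf_of_complete_convex hne (hc.isComplete) hconv x
  haveI : Nonempty C := hne.to_subtype
  refine ⟨p, isProjPt_of_min hconv hp fun c hc' => ?_⟩
  rw [hmin]
  refine ciInf_le ⟨0, ?_⟩ (⟨c, hc'⟩ : C)
  rintro r ⟨w, rfl⟩
  exact norm_nonneg _

lemma IsProjPt.fne {C : Set H} {x y p p' : H} (h : IsProjPt C x p) (h' : IsProjPt C y p') :
    ‖p - p'‖^2 ≤ ⟪x - y, p - p'⟫ := by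
  have h1 := h.2 p' h'.1
  have h2 := h'.2 p h.1
  have e : ⟪x - y, p - p'⟫ - ‖p - p'‖^2 = - ⟪x - p, p' - p⟫ - ⟪y - p', p - p'⟫ := by
    simp only [← real_inner_self_eq_norm_sq, inner_sub_left, inner_sub_right]
    linarith [real_inner_comm p p']
  linarith

lemma norm_le_of_sq_le_sq {a b : ℝ} (h : a^2 ≤ b^2) (hb : 0 ≤ b) (ha : 0 ≤ a) : a ≤ b := by
  nlinarith

lemma step_contract {C : Set H} {β : ℝ} (hβ : β ∈ Set.Ioo (0:ℝ) 1) {x y p p' : H}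
    (h : IsProjPt C x p) (h' : IsProjPt C y p') :
    ‖((2*β) • p - x) - ((2*β) • p' - y)‖ ≤ ‖x - y‖ := by
  obtain ⟨hβ0, hβ1⟩ := hβ
  have hfne := h.fne h'
  apply norm_le_of_sq_le_sq _ (norm_nonneg _) (norm_nonneg _)
  have e : ((2*β) • p - x) - ((2*β) • p' - y) = (2*β) • (p - p') - (x - y) := by module
  rw [e, norm_sub_sq_real, real_inner_smul_left, norm_smul]
  have : ‖(2*β : ℝ)‖ = 2*β := by rw [Real.norm_eq_abs, abs_of_pos]; linarith
  rw [this]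
  have hc' : ⟪p - p', x - y⟫ = ⟪x - y, p - p'⟫ := real_inner_comm _ _
  have h4 : β*‖p - p'‖^2 ≤ β*⟪x - y, p - p'⟫ := by nlinarith
  have h5 : β^2*‖p - p'‖^2 ≤ β*‖p - p'‖^2 := by
    nlinarith [mul_nonneg (by nlinarith : (0:ℝ) ≤ β - β^2) (sq_nonneg ‖p - p'‖)]
  nlinarith [h4, h5, hc']

variable {H : Type*} [NormedAddCommGroup H] [InnerProductSpace ℝ H] [CompleteSpace H]

lemma normal_decomp {S₁ S₂ : Set H} (h₁ : Convex ℝ S₁) (h₂ : Convex ℝ S₂)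
    {ξ s₀ : H} (hξ₁ : ξ ∈ S₁) (hξ₂ : ξ ∈ S₂) (hs₀₁ : s₀ ∈ S₁) (hs₀₂ : s₀ ∈ interior S₂)
    {u : H} (hu : ∀ e ∈ S₁ ∩ S₂, ⟪u, e - ξ⟫ ≤ 0) :
    ∃ u₁ u₂, u = u₁ + u₂ ∧ (∀ c ∈ S₁, ⟪u₁, c - ξ⟫ ≤ 0) ∧ (∀ c ∈ S₂, ⟪u₂, c - ξ⟫ ≤ 0) := by
  classical
  set O : Set (H × ℝ) := {p | p.1 + ξ ∈ interior S₂ ∧ 0 < p.2} with hO_def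
  set D : Set (H × ℝ) := {p | ∃ c ∈ S₁, p.1 = c - ξ ∧ p.2 ≤ ⟪u, c - ξ⟫} with hD_def
  have hOopen : IsOpen O := by
    have e : O = ((fun p : H × ℝ => p.1 + ξ) ⁻¹' interior S₂) ∩
        ((fun p : H × ℝ => p.2) ⁻¹' Set.Ioi 0) := by
      ext p; simp [hO_def, Set.mem_preimage]
    rw [e]
    exact (isOpen_interior.preimage (continuous_fst.add continuous_const)).inter
      (isOpen_Ioi.preimage continuous_snd)
  have hOconv : Convex ℝ O := by
    intro p hp q hq a b ha hb hab
    refine ⟨?_, ?_⟩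
    · have e : (a • p + b • q).1 + ξ = a • (p.1 + ξ) + b • (q.1 + ξ) := by
        show a • p.1 + b • q.1 + ξ = _
        match_scalars <;> linarith
      rw [e]
      exact (h₂.interior) hp.1 hq.1 ha hb hab
    · show 0 < a * p.2 + b * q.2
      rcases eq_or_lt_of_le ha with h | h
      · have hb1 : b = 1 := by linarith
        simp [← h, hb1]; exact hq.2
      · have : 0 ≤ b * q.2 := mul_nonneg hb (le_of_lt hq.2)
        nlinarith [hp.2]
  have hDconv : Convex ℝ D := by
    rintro p ⟨c₁, hc₁, e₁, l₁⟩ q ⟨c₂, hc₂, e₂, l₂⟩ a b ha hb hab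
    refine ⟨a • c₁ + b • c₂, h₁ hc₁ hc₂ ha hb hab, ?_, ?_⟩
    · show a • p.1 + b • q.1 = _
      rw [e₁, e₂]
      match_scalars <;> linarith
    · show a * p.2 + b * q.2 ≤ _
      have e3 : a • c₁ + b • c₂ - ξ = a • (c₁ - ξ) + b • (c₂ - ξ) := by
        match_scalars <;> linarith
      rw [e3, inner_add_right, real_inner_smul_right, real_inner_smul_right]
      have := mul_le_mul_of_nonneg_left l₁ ha
      have := mul_le_mul_of_nonneg_left l₂ hb
      linarith
  have hdisj : Disjoint O D := by
    rw [Set.disjoint_left]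
    rintro p ⟨hp1, hp2⟩ ⟨c, hc, e, l⟩
    have hceq : c = p.1 + ξ := by rw [e]; abel
    have hcS₂ : c ∈ S₂ := by rw [hceq]; exact interior_subset hp1
    have := hu c ⟨hc, hcS₂⟩
    linarith
  obtain ⟨f, r, hOlt, hDge⟩ := geometric_hahn_banach_open hOconv hOopen hDconv hdisj
  set γ : ℝ := f (0, 1) with hγ_def
  set ψ : H := (InnerProductSpace.toDual ℝ H).symm
    (f.comp (ContinuousLinearMap.inl ℝ H ℝ)) with hψ_def
  have hf : ∀ (y : H) (t : ℝ), f (y, t) = ⟪ψ, y⟫ + t * γ := by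
    intro y t
    have e1 : (y, t) = (y, (0:ℝ)) + t • ((0:H), (1:ℝ)) := by
      simp [Prod.ext_iff]
    rw [e1, map_add, map_smul]
    have e2 : ⟪ψ, y⟫ = f (y, 0) := by
      rw [hψ_def, InnerProductSpace.toDual_symm_apply]
      rfl
    rw [e2, smul_eq_mul, hγ_def]
  have hD' : ∀ c ∈ S₁, ∀ s : ℝ, s ≤ ⟪u, c - ξ⟫ → r ≤ ⟪ψ, c - ξ⟫ + s * γ := by
    intro c hc s hs
    have := hDge (c - ξ, s) ⟨c, hc, rfl, hs⟩
    rwa [hf] at this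
  have hO' : ∀ c, c + ξ ∈ interior S₂ → ∀ s : ℝ, 0 < s → ⟪ψ, c⟫ + s * γ < r := by
    intro c hc s hs
    have := hOlt (c, s) ⟨hc, hs⟩
    rwa [hf] at this
  have hinner0 : ⟪ψ, ξ - ξ⟫ = 0 := by simp
  have huinner0 : ⟪u, ξ - ξ⟫ = 0 := by simp
  have hγ0 : γ ≤ 0 := by
    by_contra hpos
    push_neg at hpos
    have hs : min 0 ((r-1)/γ) ≤ ⟪u, ξ - ξ⟫ := by rw [huinner0]; exact min_le_left _ _
    have := hD' ξ hξ₁ _ hs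
    rw [hinner0] at this
    have h2 : min 0 ((r-1)/γ) * γ ≤ ((r-1)/γ) * γ :=
      mul_le_mul_of_nonneg_right (min_le_right _ _) (le_of_lt hpos)
    rw [div_mul_cancel₀ _ (ne_of_gt hpos)] at h2
    linarith
  have hr0 : r ≤ 0 := by
    have := hD' ξ hξ₁ 0 (by rw [huinner0])
    rw [hinner0] at this; linarith
  have hS₂int : ∀ c ∈ interior S₂, ⟪ψ, c - ξ⟫ ≤ r := by
    intro c hc
    by_contra hcon
    push_neg at hcon
    set d : ℝ := ⟪ψ, c - ξ⟫ - r with hd_def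
    have hd : 0 < d := by linarith
    have h1γ : (0:ℝ) < 1 - γ := by linarith
    have hs : 0 < d / (1 - γ) := div_pos hd h1γ
    have := hO' (c - ξ) (by rwa [sub_add_cancel]) _ hs
    have h2 : d / (1 - γ) * γ ≥ -d := by
      rw [ge_iff_le, neg_le, ← mul_neg]
      calc d / (1 - γ) * -γ ≤ d / (1 - γ) * (1 - γ) :=
        mul_le_mul_of_nonneg_left (by linarith) (le_of_lt hs)
      _ = d := by field_simp
    linarith
  have hS₂r : ∀ c ∈ S₂, ⟪ψ, c - ξ⟫ ≤ r := by
    intro c hc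
    by_contra hcon
    push_neg at hcon
    set K : ℝ := ⟪ψ, s₀ - ξ⟫ - ⟪ψ, c - ξ⟫ with hK_def
    set d : ℝ := ⟪ψ, c - ξ⟫ - r with hd2_def
    have hd : 0 < d := by simp only [hd2_def]; linarith
    have hden : (0:ℝ) < 1 + |K| := by positivity
    set t : ℝ := min 1 (d / (2 * (1 + |K|))) with ht_def
    have ht0 : 0 < t := lt_min one_pos (by positivity)
    have ht1 : t ≤ 1 := min_le_left _ _
    have hmem : t • s₀ + (1 - t) • c ∈ interior S₂ :=
      h₂.combo_interior_closure_mem_interior hs₀₂ (subset_closure hc) ht0 (by linarith)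
        (by ring)
    have hkey := hS₂int _ hmem
    have e : t • s₀ + (1 - t) • c - ξ = t • (s₀ - ξ) + (1 - t) • (c - ξ) := by
      match_scalars <;> ring
    rw [e, inner_add_right, real_inner_smul_right, real_inner_smul_right] at hkey
    have h7 : t * (1 + |K|) ≤ d / 2 := by
      calc t * (1 + |K|) ≤ (d / (2 * (1 + |K|))) * (1 + |K|) :=
        mul_le_mul_of_nonneg_right (min_le_right _ _) hden.le
      _ = d / 2 := by field_simp
    have h8 : t * (-K) ≤ t * |K| := mul_le_mul_of_nonneg_left (neg_le_abs K) ht0.le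
    have h9 : t * |K| ≤ t * (1 + |K|) := mul_le_mul_of_nonneg_left (by linarith) ht0.le
    have h10 : t * ⟪ψ, s₀ - ξ⟫ + (1 - t) * ⟪ψ, c - ξ⟫ = ⟪ψ, c - ξ⟫ + t * K := by
      simp only [hK_def]; ring
    linarith [hkey, h10]
  have hrr : r = 0 := by
    have := hS₂r ξ hξ₂
    rw [hinner0] at this
    linarith
  have hγneg : γ < 0 := by
    rcases lt_or_eq_of_le hγ0 with h | h
    · exact h
    · exfalso
      have h1 := hO' (s₀ - ξ) (by rwa [sub_add_cancel]) 1 one_pos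
      have h2 := hD' s₀ hs₀₁ ⟪u, s₀ - ξ⟫ le_rfl
      rw [h] at h1 h2
      rw [hrr] at h1 h2
      linarith
  set k : ℝ := (-γ)⁻¹ with hk_def
  have hk0 : 0 < k := by rw [hk_def]; exact inv_pos.2 (by linarith)
  have hkγ : k * (-γ) = 1 := by
    rw [hk_def]
    exact inv_mul_cancel₀ (by linarith)
  refine ⟨u - k • ψ, k • ψ, by abel, ?_, ?_⟩
  · intro c hc
    have h2 := hD' c hc ⟪u, c - ξ⟫ le_rfl
    rw [hrr] at h2
    rw [inner_sub_left, real_inner_smul_left]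
    have h5 : (-γ) * ⟪u, c - ξ⟫ ≤ ⟪ψ, c - ξ⟫ := by linarith
    have h6 : k * (-γ * ⟪u, c - ξ⟫) = ⟪u, c - ξ⟫ := by
      rw [← mul_assoc, hkγ, one_mul]
    have h7 := mul_le_mul_of_nonneg_left h5 hk0.le
    linarith [h6, h7]
  · intro c hc
    have h5 := hS₂r c hc
    rw [hrr] at h5
    rw [real_inner_smul_left]
    nlinarith [mul_nonneg hk0.le (neg_nonneg.2 h5)]

end helpers

section smalldisp
variable {H : Type*} [NormedAddCommGroup H] [InnerProductSpace ℝ H] [CompleteSpace H]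

lemma small_displacement {A' B' : Set H}
    (hA'c : IsClosed A') (hA'v : Convex ℝ A') (hB'c : IsClosed B') (hB'v : Convex ℝ B')
    {α β : ℝ} (hα : α ∈ Set.Ioo (0:ℝ) 1) (hβ : β ∈ Set.Ioo (0:ℝ) 1)
    {P Q : H → H} (hP : ∀ z, IsProjPt A' z (P z)) (hQ : ∀ z, IsProjPt B' z (Q z))
    {T : H → H}
    (hT : ∀ z, T z = (1 - α) • z +
      α • ((2 * β) • Q ((2 * β) • P z - z) - ((2 * β) • P z - z)))
    {w : H} (hw : w ∈ A' - B') {μ : ℝ} (hμ : 0 < μ) :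
    ∃ z, ‖z - T z‖ ≤ 2*α*β*(‖w‖ + μ) := by
  classical
  obtain ⟨hα0, hα1⟩ := hα
  obtain ⟨hβ0, hβ1⟩ := hβ
  obtain ⟨a, ha, b, hb, hab⟩ := Set.mem_sub.1 hw
  have hB'ne : B'.Nonempty := ⟨b, hb⟩
  set B₂ : Set H := B' + Metric.closedBall (0:H) μ with hB₂_def
  have hB₂conv : Convex ℝ B₂ := hB'v.add (convex_closedBall 0 μ)
  have hBsub : B' ⊆ B₂ := fun b' hb' =>
    ⟨b', hb', 0, by simpa using hμ.le, by simp⟩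
  have hballsub : ∀ b' ∈ B', Metric.ball b' μ ⊆ B₂ := by
    intro b' hb' e he
    refine ⟨b', hb', e - b', ?_, by module⟩
    rw [Metric.mem_closedBall, dist_zero_right]
    rw [Metric.mem_ball, dist_eq_norm] at he
    exact he.le
  have hB₂closed : IsClosed B₂ := by
    rw [← closure_subset_iff_isClosed]
    intro z hz
    obtain ⟨p, hp⟩ := exists_isProjPt hB'ne hB'c hB'v z
    have hple : ‖z - p‖ ≤ μ := by
      refine le_of_forall_pos_le_add fun δ hδ => ?_
      obtain ⟨e, he, hde⟩ := Metric.mem_closure_iff.1 hz δ hδ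
      obtain ⟨b', hb', h', hh', he'⟩ := he
      have h1 : ‖z - p‖ ≤ ‖z - b'‖ := hp.min b' hb'
      have h2 : ‖z - b'‖ ≤ ‖z - e‖ + ‖h'‖ := by
        have e2 : z - b' = (z - e) + h' := by rw [← he']; module
        rw [e2]; exact norm_add_le _ _
      rw [Metric.mem_closedBall, dist_zero_right] at hh'
      rw [dist_eq_norm] at hde
      linarith
    exact ⟨p, hp.1, z - p, by rwa [Metric.mem_closedBall, dist_zero_right], by module⟩
  set S₂ : Set H := (fun e => e - w) ⁻¹' B₂ with hS₂_def
  have hS₂conv : Convex ℝ S₂ := by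
    intro e₁ he₁ e₂ he₂ c₁ c₂ hc₁ hc₂ hc
    show c₁ • e₁ + c₂ • e₂ - w ∈ B₂
    have e : c₁ • e₁ + c₂ • e₂ - w = c₁ • (e₁ - w) + c₂ • (e₂ - w) := by
      match_scalars <;> linarith
    rw [e]
    exact hB₂conv he₁ he₂ hc₁ hc₂ hc
  have hS₂closed : IsClosed S₂ := hB₂closed.preimage (continuous_id.sub continuous_const)
  have haS₂ : a ∈ S₂ := by
    show a - w ∈ B₂
    have e : a - w = b := by rw [← hab]; module
    rw [e]
    exact hBsub hb
  have hβ2 : (0:ℝ) < 2 - 2*β := by linarith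
  obtain ⟨ξ, hξ⟩ := exists_isProjPt (⟨a, ha, haS₂⟩ : (A' ∩ S₂).Nonempty)
    (hA'c.inter hS₂closed) (hA'v.inter hS₂conv) ((2 - 2*β)⁻¹ • w)
  obtain ⟨hξA, hξS₂⟩ := hξ.1
  obtain ⟨u, hu_def⟩ : ∃ t : H, t = w - (2 - 2*β) • ξ := ⟨_, rfl⟩
  have hu : ∀ e ∈ A' ∩ S₂, ⟪u, e - ξ⟫ ≤ 0 := by
    intro e he
    have h1 := hξ.2 e he
    have e2 : u = (2 - 2*β) • ((2 - 2*β)⁻¹ • w - ξ) := by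
      rw [hu_def, smul_sub, smul_smul, mul_inv_cancel₀ (ne_of_gt hβ2), one_smul]
    rw [e2, real_inner_smul_left]
    exact mul_nonpos_iff.2 (Or.inl ⟨hβ2.le, h1⟩)
  have haint : a ∈ interior S₂ := by
    rw [mem_interior]
    refine ⟨Metric.ball a μ, ?_, Metric.isOpen_ball, Metric.mem_ball_self hμ⟩
    intro e he
    show e - w ∈ B₂
    refine hballsub b hb ?_
    rw [Metric.mem_ball, dist_eq_norm]
    have e2 : e - w - b = e - a := by rw [← hab]; module
    rw [e2, ← dist_eq_norm]
    exact Metric.mem_ball.1 he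
  obtain ⟨u₁, u₂, hsum, h1, h2⟩ := normal_decomp hA'v hS₂conv hξA hξS₂ ha haint hu
  obtain ⟨z, hz_def⟩ : ∃ t : H, t = ξ + u₁ := ⟨_, rfl⟩
  have hmine : IsProjPt A' z ξ := by
    refine ⟨hξA, fun c hc => ?_⟩
    have e : z - ξ = u₁ := by rw [hz_def]; module
    rw [e]
    exact h1 c hc
  have hPz : P z = ξ := (hP z).unique hmine
  have hdisp : z - T z = (2*α*β) • (P z - Q ((2*β) • P z - z)) := by
    have h2b : (2:ℝ) * β = 2 * β := rfl
    rw [hT z]; module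
  obtain ⟨y, hy_def⟩ : ∃ t : H, t = (2*β) • P z - z := ⟨_, rfl⟩
  have hyξ : y - (ξ - w) = u₂ := by
    have e : u₂ = u - u₁ := by rw [hsum]; module
    rw [hy_def, hPz, hz_def, e, hu_def]
    module
  have hprojB₂ : IsProjPt B₂ y (ξ - w) := by
    refine ⟨hξS₂, fun c hc => ?_⟩
    rw [hyξ]
    have hcw : c + w ∈ S₂ := by show c + w - w ∈ B₂; simpa using hc
    have h3 := h2 (c + w) hcw
    have e3 : c + w - ξ = c - (ξ - w) := by module
    rwa [e3] at h3
  obtain ⟨p, hp_def⟩ : ∃ t : H, t = Q y := ⟨_, rfl⟩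
  have hQchar : IsProjPt B' y p := hp_def ▸ hQ y
  have hclose : ‖p - (ξ - w)‖ ≤ μ := by
    obtain ⟨d, hd_def⟩ : ∃ t : ℝ, t = ‖y - p‖ := ⟨_, rfl⟩
    rcases le_or_gt d μ with hle | hlt
    · have hyB₂ : y ∈ B₂ :=
        ⟨p, hQchar.1, y - p,
          by rw [Metric.mem_closedBall, dist_zero_right]; exact hd_def ▸ hle, by module⟩
      have e : ξ - w = y := hprojB₂.unique ⟨hyB₂, fun c hc => by simp⟩
      rw [e, norm_sub_rev]
      exact hd_def ▸ hle
    · have hd0 : 0 < d := lt_trans hμ hlt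
      obtain ⟨c₀, hc₀_def⟩ : ∃ t : H, t = p + (μ/d) • (y - p) := ⟨_, rfl⟩
      have hμd : (0:ℝ) ≤ μ/d := div_nonneg hμ.le hd0.le
      have hc₀B₂ : c₀ ∈ B₂ := by
        refine ⟨p, hQchar.1, (μ/d) • (y - p), ?_, hc₀_def.symm⟩
        rw [Metric.mem_closedBall, dist_zero_right, norm_smul, Real.norm_eq_abs,
          abs_of_nonneg hμd, ← hd_def, div_mul_cancel₀ _ (ne_of_gt hd0)]
      have hchar : ∀ c ∈ B₂, ⟪y - c₀, c - c₀⟫ ≤ 0 := by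
        rintro c ⟨b'', hb'', h'', hh'', rfl⟩
        rw [Metric.mem_closedBall, dist_zero_right] at hh''
        have e4 : y - c₀ = (1 - μ/d) • (y - p) := by rw [hc₀_def]; module
        have e5 : b'' + h'' - c₀ = (b'' - p) + (h'' - (μ/d) • (y - p)) := by
          rw [hc₀_def]; module
        have i4 : ⟪y - p, h'' - (μ/d) • (y - p)⟫ =
            ⟪y - p, h''⟫ - μ/d * ⟪y - p, y - p⟫ := by
          rw [inner_sub_right, real_inner_smul_right]
        rw [e4, e5, real_inner_smul_left, inner_add_right, i4]
        have i1 : ⟪y - p, b'' - p⟫ ≤ 0 := hQchar.2 b'' hb''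
        have i2 : ⟪y - p, h''⟫ ≤ d * μ := by
          calc ⟪y - p, h''⟫ ≤ ‖y - p‖ * ‖h''‖ := real_inner_le_norm _ _
          _ ≤ d * μ := by
            rw [← hd_def]
            exact mul_le_mul_of_nonneg_left hh'' hd0.le
        have i3 : ⟪y - p, y - p⟫ = d^2 := by
          rw [real_inner_self_eq_norm_sq, hd_def]
        have hfrac : (0:ℝ) ≤ 1 - μ/d := by
          rw [sub_nonneg, div_le_one hd0]; exact hlt.le
        have hdd : μ/d * d^2 = μ * d := by field_simp
        have hinner_le : ⟪y - p, b'' - p⟫ + (⟪y - p, h''⟫ - μ/d * ⟪y - p, y - p⟫) ≤ 0 := by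
          rw [i3, hdd]
          linarith
        exact mul_nonpos_iff.2 (Or.inl ⟨hfrac, hinner_le⟩)
      have e : ξ - w = c₀ := hprojB₂.unique ⟨hc₀B₂, hchar⟩
      rw [e, hc₀_def]
      have e6 : p - (p + (μ/d) • (y - p)) = -((μ/d) • (y - p)) := by module
      rw [e6, norm_neg, norm_smul, Real.norm_eq_abs, abs_of_nonneg hμd, ← hd_def,
        div_mul_cancel₀ _ (ne_of_gt hd0)]
  refine ⟨z, ?_⟩
  rw [hdisp, ← hy_def, ← hp_def, norm_smul, Real.norm_eq_abs,
    abs_of_pos (by nlinarith : (0:ℝ) < 2*α*β)]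
  have hnorm : ‖P z - p‖ ≤ ‖w‖ + μ := by
    rw [hPz]
    have e6 : ξ - p = w + ((ξ - w) - p) := by module
    rw [e6]
    calc ‖w + ((ξ - w) - p)‖ ≤ ‖w‖ + ‖(ξ - w) - p‖ := norm_add_le _ _
    _ ≤ ‖w‖ + μ := by rw [norm_sub_rev]; linarith [hclose]
  exact mul_le_mul_of_nonneg_left hnorm (by nlinarith : (0:ℝ) ≤ 2*α*β)
end smalldisp

section avg
variable {H : Type*} [NormedAddCommGroup H] [InnerProductSpace ℝ H]

lemma combo_sq (a b : H) (t : ℝ) :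
    ‖(1-t) • a + t • b‖^2 = (1-t)*‖a‖^2 + t*‖b‖^2 - t*(1-t)*‖a - b‖^2 := by
  have ha2 : ‖(1-t) • a‖^2 = (1-t)^2*‖a‖^2 := by
    rw [norm_smul, mul_pow, Real.norm_eq_abs, sq_abs]
  have hb2 : ‖t • b‖^2 = t^2*‖b‖^2 := by
    rw [norm_smul, mul_pow, Real.norm_eq_abs, sq_abs]
  have hip : ⟪(1-t) • a, t • b⟫ = (1-t)*(t*⟪a, b⟫) := by
    rw [real_inner_smul_left, real_inner_smul_right]
  rw [norm_add_sq_real, ha2, hb2, hip, norm_sub_sq_real]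
  ring

lemma T_props {A' B' : Set H}
    {α β : ℝ} (hα : α ∈ Set.Ioo (0:ℝ) 1) (hβ : β ∈ Set.Ioo (0:ℝ) 1)
    {P Q : H → H} (hP : ∀ z, IsProjPt A' z (P z)) (hQ : ∀ z, IsProjPt B' z (Q z))
    {T : H → H}
    (hT : ∀ z, T z = (1 - α) • z +
      α • ((2 * β) • Q ((2 * β) • P z - z) - ((2 * β) • P z - z))) :
    (∀ x y, ‖T x - T y‖ ≤ ‖x - y‖) ∧
    (∀ x y, ((1-α)/α) * ‖(x - T x) - (y - T y)‖^2 ≤ ‖x - y‖^2 - ‖T x - T y‖^2) := by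
  obtain ⟨hα0, hα1⟩ := hα
  set N : H → H := fun z => (2 * β) • Q ((2 * β) • P z - z) - ((2 * β) • P z - z)
    with hN_def
  have hN : ∀ x y, ‖N x - N y‖ ≤ ‖x - y‖ := by
    intro x y
    have e1 : N x - N y = ((2*β) • Q ((2 * β) • P x - x) - ((2 * β) • P x - x)) -
        ((2*β) • Q ((2 * β) • P y - y) - ((2 * β) • P y - y)) := by
      simp only [hN_def]
    have s1 : ‖((2*β) • Q ((2 * β) • P x - x) - ((2 * β) • P x - x)) -
        ((2*β) • Q ((2 * β) • P y - y) - ((2 * β) • P y - y))‖ ≤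
        ‖((2 * β) • P x - x) - ((2 * β) • P y - y)‖ :=
      step_contract hβ (hQ _) (hQ _)
    have s2 : ‖((2 * β) • P x - x) - ((2 * β) • P y - y)‖ ≤ ‖x - y‖ :=
      step_contract hβ (hP x) (hP y)
    rw [e1]
    exact s1.trans s2
  have hTc : ∀ z, T z = (1 - α) • z + α • (N z) := hT
  have hTd : ∀ x y, T x - T y = (1-α) • (x - y) + α • (N x - N y) := by
    intro x y
    rw [hTc x, hTc y]
    module
  have hsq : ∀ x y, ‖T x - T y‖^2 = (1-α)*‖x-y‖^2 + α*‖N x - N y‖^2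
      - α*(1-α)*‖(x-y) - (N x - N y)‖^2 := by
    intro x y
    rw [hTd x y, combo_sq]
  have hdiff : ∀ x y, (x - T x) - (y - T y) = α • ((x - y) - (N x - N y)) := by
    intro x y
    rw [hTc x, hTc y]
    module
  have hdiffsq : ∀ x y, ‖(x - T x) - (y - T y)‖^2 = α^2 * ‖(x-y) - (N x - N y)‖^2 := by
    intro x y
    rw [hdiff x y, norm_smul, mul_pow, Real.norm_eq_abs, sq_abs]
  have h1sq : ∀ x y, ‖N x - N y‖^2 ≤ ‖x - y‖^2 := by
    intro x y
    have h1 := hN x y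
    nlinarith [norm_nonneg (N x - N y), norm_nonneg (x - y)]
  constructor
  · intro x y
    apply norm_le_of_sq_le_sq _ (norm_nonneg _) (norm_nonneg _)
    have h2 := hsq x y
    have h3 := mul_nonneg hα0.le (sub_nonneg.2 (h1sq x y))
    have h4 := mul_nonneg (mul_nonneg hα0.le (by linarith : (0:ℝ) ≤ 1-α))
      (sq_nonneg ‖(x-y) - (N x - N y)‖)
    nlinarith [h2, h3, h4]
  · intro x y
    rw [hdiffsq x y, hsq x y]
    have hq : ((1-α)/α) * (α^2 * ‖(x-y) - (N x - N y)‖^2) =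
        α*(1-α)*‖(x-y) - (N x - N y)‖^2 := by
      field_simp
    rw [hq]
    have h3 := mul_nonneg hα0.le (sub_nonneg.2 (h1sq x y))
    linarith [h3]
end avg

set_option maxHeartbeats 1000000 in
/-- If `H` is finite-dimensional, or `int A ≠ ∅`, or `int B ≠ ∅`, then
the AAMR iterates `x_{n+1} = T_{A−q,B−q,α,β}(x_n)` satisfy
`x_n − x_{n+1} → 2αβ v` in norm, where `v = P_{cl(A−B)}(0)`. -/
theorem stmt_18 {H : Type*} [NormedAddCommGroup H] [InnerProductSpace ℝ H] [CompleteSpace H]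
    (A B : Set H) (hAne : A.Nonempty) (hAc : IsClosed A) (hAv : Convex ℝ A)
    (hBne : B.Nonempty) (hBc : IsClosed B) (hBv : Convex ℝ B)
    (α β : ℝ) (hα : α ∈ Set.Ioo (0 : ℝ) 1) (hβ : β ∈ Set.Ioo (0 : ℝ) 1)
    (q : H)
    (PAq PBq : H → H)
    (hPAq : ∀ x, PAq x ∈ A - {q} ∧ ∀ c ∈ A - {q}, ‖x - PAq x‖ ≤ ‖x - c‖)
    (hPBq : ∀ x, PBq x ∈ B - {q} ∧ ∀ c ∈ B - {q}, ‖x - PBq x‖ ≤ ‖x - c‖)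
    (T : H → H)
    (hT : ∀ x, T x =
      (1 - α) • x + α • ((2 * β) • PBq ((2 * β) • PAq x - x) - ((2 * β) • PAq x - x)))
    (x : ℕ → H) (hrec : ∀ n, x (n + 1) = T (x n))
    (hcase : FiniteDimensional ℝ H ∨ (interior A).Nonempty ∨ (interior B).Nonempty)
    (v : H) (hv : v ∈ closure (A - B) ∧ ∀ w ∈ closure (A - B), ‖v‖ ≤ ‖w‖) :
    Tendsto (fun n => x n - x (n + 1)) atTop (nhds ((2 * α * β) • v)) := by
  classical
  have hα0 : (0:ℝ) < α := hα.1
  have hα1 : α < 1 := hα.2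
  have hβ0 : (0:ℝ) < β := hβ.1
  have hβ1 : β < 1 := hβ.2
  have h2ab : (0:ℝ) < 2*α*β := by
    have := mul_pos hα0 hβ0
    linarith
  -- basic facts about the translated sets
  have hA'eq : A - {q} = (fun y => y + q) ⁻¹' A := by
    ext t
    constructor
    · intro ht
      obtain ⟨a, ha, b, hb, rfl⟩ := Set.mem_sub.1 ht
      rw [Set.mem_singleton_iff] at hb
      show a - b + q ∈ A
      rw [hb]
      simpa using ha
    · intro ht
      exact Set.mem_sub.2 ⟨t + q, ht, q, rfl, by module⟩
  have hB'eq : B - {q} = (fun y => y + q) ⁻¹' B := by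
    ext t
    constructor
    · intro ht
      obtain ⟨a, ha, b, hb, rfl⟩ := Set.mem_sub.1 ht
      rw [Set.mem_singleton_iff] at hb
      show a - b + q ∈ B
      rw [hb]
      simpa using ha
    · intro ht
      exact Set.mem_sub.2 ⟨t + q, ht, q, rfl, by module⟩
  have hA'c : IsClosed (A - {q}) := by
    rw [hA'eq]; exact hAc.preimage (continuous_id.add continuous_const)
  have hB'c : IsClosed (B - {q}) := by
    rw [hB'eq]; exact hBc.preimage (continuous_id.add continuous_const)
  have hA'v : Convex ℝ (A - {q}) := hAv.sub (convex_singleton q)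
  have hB'v : Convex ℝ (B - {q}) := hBv.sub (convex_singleton q)
  have hsub : (A - {q}) - (B - {q}) = A - B := by
    ext t
    constructor
    · intro ht
      obtain ⟨x1, hx1, x2, hx2, rfl⟩ := Set.mem_sub.1 ht
      obtain ⟨a, ha, b1, hb1, rfl⟩ := Set.mem_sub.1 hx1
      obtain ⟨b, hb, b2, hb2, rfl⟩ := Set.mem_sub.1 hx2
      rw [Set.mem_singleton_iff] at hb1 hb2
      subst hb1; subst hb2
      exact Set.mem_sub.2 ⟨a, ha, b, hb, by module⟩
    · intro ht
      obtain ⟨a, ha, b, hb, rfl⟩ := Set.mem_sub.1 ht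
      exact Set.mem_sub.2 ⟨a - q, Set.sub_mem_sub ha rfl, b - q, Set.sub_mem_sub hb rfl,
        by module⟩
  have hP : ∀ z, IsProjPt (A - {q}) z (PAq z) :=
    fun z => isProjPt_of_min hA'v (hPAq z).1 (hPAq z).2
  have hQ : ∀ z, IsProjPt (B - {q}) z (PBq z) :=
    fun z => isProjPt_of_min hB'v (hPBq z).1 (hPBq z).2
  -- displacement identity
  have hdisp : ∀ z, z - T z = (2*α*β) • (PAq z - PBq ((2 * β) • PAq z - z)) := by
    intro z
    rw [hT z]
    module
  set k : ℕ → H := fun n => PAq (x n) - PBq ((2 * β) • PAq (x n) - x n) with hk_def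
  have hΔ : ∀ n, x n - x (n+1) = (2*α*β) • k n := by
    intro n
    rw [hrec n]
    simp only [hk_def]
    exact hdisp (x n)
  have hkmem : ∀ n, k n ∈ closure (A - B) := by
    intro n
    apply subset_closure
    rw [← hsub]
    exact Set.sub_mem_sub (hP (x n)).1 (hQ _).1
  have hknorm : ∀ n, ‖v‖ ≤ ‖k n‖ := fun n => hv.2 _ (hkmem n)
  set g : ℕ → ℝ := fun n => ‖x n - x (n+1)‖ with hg_def
  have hgk : ∀ n, g n = 2*α*β*‖k n‖ := by
    intro n
    simp only [hg_def]
    rw [hΔ n, norm_smul, Real.norm_eq_abs, abs_of_pos h2ab]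
  obtain ⟨hne, havg⟩ := T_props hα hβ hP hQ hT
  have hganti : Antitone g := by
    apply antitone_nat_of_succ_le
    intro n
    simp only [hg_def]
    have e : x (n+1) - x (n+1+1) = T (x n) - T (x (n+1)) := by
      rw [hrec (n+1), hrec n]
    rw [e]
    exact hne (x n) (x (n+1))
  have hbdd : BddBelow (Set.range g) := ⟨0, by rintro r ⟨n, rfl⟩; exact norm_nonneg _⟩
  have htend : Tendsto g atTop (nhds (⨅ n, g n)) := tendsto_atTop_ciInf hganti hbdd
  have hlow : ∀ n, 2*α*β*‖v‖ ≤ g n := by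
    intro n
    rw [hgk n]
    exact mul_le_mul_of_nonneg_left (hknorm n) h2ab.le
  have hiLB : 2*α*β*‖v‖ ≤ ⨅ n, g n := le_ciInf hlow
  have hiUB : (⨅ n, g n) ≤ 2*α*β*‖v‖ := by
    refine le_of_forall_pos_le_add fun ε hε => ?_
    obtain ⟨μ, hμ_def⟩ : ∃ t : ℝ, t = ε/(8*α*β) := ⟨_, rfl⟩
    have hμ0 : 0 < μ := by
      rw [hμ_def]
      exact div_pos hε (by linarith)
    have hvA' : v ∈ closure ((A - {q}) - (B - {q})) := by rw [hsub]; exact hv.1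
    obtain ⟨w, hwmem, hwdist⟩ := Metric.mem_closure_iff.1 hvA' μ hμ0
    have hwn : ‖w‖ ≤ ‖v‖ + μ := by
      have e : w = v + (w - v) := by module
      have h1 : ‖w‖ ≤ ‖v‖ + ‖w - v‖ := by
        nth_rewrite 1 [e]
        exact norm_add_le _ _
      have h2 : ‖w - v‖ = dist v w := by rw [dist_eq_norm, norm_sub_rev]
      linarith [h1, h2 ▸ hwdist]
    obtain ⟨z, hz⟩ := small_displacement hA'c hA'v hB'c hB'v hα hβ hP hQ hT hwmem hμ0
    have hzb : ‖z - T z‖ ≤ 2*α*β*‖v‖ + ε/2 := by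
      have h3 : 2*α*β*(‖w‖ + μ) ≤ 2*α*β*(‖v‖ + 2*μ) :=
        mul_le_mul_of_nonneg_left (by linarith) h2ab.le
      have he : 2*α*β*(‖v‖ + 2*μ) = 2*α*β*‖v‖ + ε/2 := by
        rw [hμ_def]
        field_simp
        ring
      linarith [hz]
    obtain ⟨zz, hzz_def⟩ : ∃ t : ℕ → H, t = fun n => T^[n] z := ⟨_, rfl⟩
    have hzzrec : ∀ n, zz (n+1) = T (zz n) := by
      intro n
      rw [hzz_def]
      exact Function.iterate_succ_apply' T n z
    have hzz0 : zz 0 = z := by rw [hzz_def]; simp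
    have hDanti : ∀ n, ‖zz n - zz (n+1)‖ ≤ ‖z - T z‖ := by
      intro n
      induction n with
      | zero => rw [hzzrec 0, hzz0]
      | succ m ih =>
        have h4 := hne (zz m) (zz (m+1))
        rw [← hzzrec m, ← hzzrec (m+1)] at h4
        exact h4.trans ih
    have key : ∀ n, ((1-α)/α) * ‖(x n - x (n+1)) - (zz n - zz (n+1))‖^2 ≤
        ‖x n - zz n‖^2 - ‖x (n+1) - zz (n+1)‖^2 := by
      intro n
      have h := havg (x n) (zz n)
      rw [← hrec n, ← hzzrec n] at h
      exact h
    have hsumle : ∀ m : ℕ,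
        (∑ n ∈ Finset.range m, ((1-α)/α) * ‖(x n - x (n+1)) - (zz n - zz (n+1))‖^2) ≤
        ‖x 0 - zz 0‖^2 - ‖x m - zz m‖^2 := by
      intro m
      induction m with
      | zero => simp
      | succ m ih =>
        rw [Finset.sum_range_succ]
        have := key m
        linarith
    have hc0 : (0:ℝ) < (1-α)/α := div_pos (by linarith) hα0
    have hex : ∃ n, ‖(x n - x (n+1)) - (zz n - zz (n+1))‖ ≤ ε/2 := by
      by_contra hcon
      push_neg at hcon
      obtain ⟨Cst, hCst⟩ : ∃ t : ℝ, t = ‖x 0 - zz 0‖^2 := ⟨_, rfl⟩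
      obtain ⟨m, hm⟩ : ∃ t : ℕ, t = ⌈Cst/(((1-α)/α) * (ε/2)^2)⌉₊ + 1 := ⟨_, rfl⟩
      have hterm : ∀ n, ((1-α)/α)*(ε/2)^2 ≤
          ((1-α)/α) * ‖(x n - x (n+1)) - (zz n - zz (n+1))‖^2 := by
        intro n
        have h5 := hcon n
        have hsq : (ε/2)^2 ≤ ‖(x n - x (n+1)) - (zz n - zz (n+1))‖^2 := by nlinarith
        exact mul_le_mul_of_nonneg_left hsq hc0.le
      have hsum_ge : (m:ℝ) * (((1-α)/α)*(ε/2)^2) ≤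
          ∑ n ∈ Finset.range m, ((1-α)/α) * ‖(x n - x (n+1)) - (zz n - zz (n+1))‖^2 := by
        calc (m:ℝ) * (((1-α)/α)*(ε/2)^2)
            = ∑ _n ∈ Finset.range m, ((1-α)/α)*(ε/2)^2 := by
              rw [Finset.sum_const, Finset.card_range, nsmul_eq_mul]
        _ ≤ _ := Finset.sum_le_sum fun n _ => hterm n
      have hup : (∑ n ∈ Finset.range m,
          ((1-α)/α) * ‖(x n - x (n+1)) - (zz n - zz (n+1))‖^2) ≤ Cst := by
        have := hsumle m
        have h6 : ‖x 0 - zz 0‖^2 - ‖x m - zz m‖^2 ≤ Cst := by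
          rw [hCst]
          nlinarith [sq_nonneg ‖x m - zz m‖]
        linarith
      have hpos : (0:ℝ) < ((1-α)/α)*(ε/2)^2 := mul_pos hc0 (by positivity)
      have hNbig : Cst < (m:ℝ) * (((1-α)/α)*(ε/2)^2) := by
        have hceil := Nat.le_ceil (Cst/(((1-α)/α)*(ε/2)^2))
        have h7 : Cst/(((1-α)/α)*(ε/2)^2) < (m:ℝ) := by
          rw [hm]
          push_cast
          linarith
        have h8 := mul_lt_mul_of_pos_right h7 hpos
        rwa [div_mul_cancel₀ _ (ne_of_gt hpos)] at h8
      linarith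
    obtain ⟨n, hn⟩ := hex
    have hgn : g n ≤ 2*α*β*‖v‖ + ε := by
      have e : x n - x (n+1) = (zz n - zz (n+1)) + ((x n - x (n+1)) - (zz n - zz (n+1))) := by
        module
      have h8 : ‖x n - x (n+1)‖ ≤ ‖zz n - zz (n+1)‖ +
          ‖(x n - x (n+1)) - (zz n - zz (n+1))‖ := by
        nth_rewrite 1 [e]
        exact norm_add_le _ _
      have h9 : g n = ‖x n - x (n+1)‖ := by simp only [hg_def]
      rw [h9]
      linarith [hDanti n, hn, hzb]
    exact (ciInf_le hbdd n).trans hgn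
  have hiEq : (⨅ n, g n) = 2*α*β*‖v‖ := le_antisymm hiUB hiLB
  rw [hiEq] at htend
  have hknormt : Tendsto (fun n => ‖k n‖) atTop (nhds ‖v‖) := by
    have h := htend.const_mul ((2*α*β)⁻¹)
    have e : (fun n => (2*α*β)⁻¹ * g n) = fun n => ‖k n‖ := by
      funext n
      rw [hgk n, ← mul_assoc, inv_mul_cancel₀ (ne_of_gt h2ab), one_mul]
    have e2 : (2*α*β)⁻¹*(2*α*β*‖v‖) = ‖v‖ := by
      rw [← mul_assoc, inv_mul_cancel₀ (ne_of_gt h2ab), one_mul]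
    rw [e, e2] at h
    exact h
  have hABconv : Convex ℝ (closure (A - B)) := (hAv.sub hBv).closure
  have hmid : ∀ n, ‖k n - v‖^2 ≤ 2*‖k n‖^2 - 2*‖v‖^2 := by
    intro n
    have hm : (1/2:ℝ) • k n + (1/2:ℝ) • v ∈ closure (A - B) :=
      hABconv (hkmem n) hv.1 (by norm_num) (by norm_num) (by norm_num)
    have hv2 : ‖v‖ ≤ ‖(1/2:ℝ) • k n + (1/2:ℝ) • v‖ := hv.2 _ hm
    have e : (1/2:ℝ) • k n + (1/2:ℝ) • v = (1/2:ℝ) • (k n + v) := by module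
    rw [e, norm_smul, Real.norm_eq_abs, abs_of_pos one_half_pos] at hv2
    have hpar : ‖k n - v‖^2 + ‖k n + v‖^2 = 2*‖k n‖^2 + 2*‖v‖^2 := by
      rw [norm_sub_sq_real, norm_add_sq_real]
      ring
    have hv3 : 2*‖v‖ ≤ ‖k n + v‖ := by linarith
    have hv4 : 4*‖v‖^2 ≤ ‖k n + v‖^2 := by nlinarith [norm_nonneg v, norm_nonneg (k n + v)]
    linarith [hpar, hv4]
  have hg2 : Tendsto (fun n => 2*‖k n‖^2 - 2*‖v‖^2) atTop (nhds 0) := by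
    have h1 : Tendsto (fun n => ‖k n‖^2) atTop (nhds (‖v‖^2)) := hknormt.pow 2
    have h2 := (h1.const_mul (2:ℝ)).sub_const (2*‖v‖^2)
    simpa using h2
  have hsq0 : Tendsto (fun n => ‖k n - v‖^2) atTop (nhds 0) :=
    squeeze_zero (fun n => sq_nonneg _) hmid hg2
  have hkt : Tendsto (fun n => ‖k n - v‖) atTop (nhds 0) := by
    have h := (Real.continuous_sqrt.tendsto 0).comp hsq0
    have e : (fun n => Real.sqrt (‖k n - v‖^2)) = fun n => ‖k n - v‖ := by
      funext n
      exact Real.sqrt_sq (norm_nonneg _)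
    rw [Real.sqrt_zero] at h
    have h2 : Tendsto (fun n => Real.sqrt (‖k n - v‖^2)) atTop (nhds 0) := h
    rwa [e] at h2
  rw [tendsto_iff_norm_sub_tendsto_zero]
  have e : (fun n => ‖(x n - x (n+1)) - (2 * α * β) • v‖) = fun n => (2*α*β)*‖k n - v‖ := by
    funext n
    rw [hΔ n, ← smul_sub, norm_smul, Real.norm_eq_abs, abs_of_pos h2ab]
  rw [e]
  have h := hkt.const_mul (2*α*β)
  simpa using h
end

section
/- Let H be a real Hilbert space, let r ≥ 1, and let C₁, …, C_r ⊆ H be nonempty closed convex sets. In the product Hilbert space H^r, let C = C₁ × ⋯ × C_r and let D = {(x, x, …, x) : x ∈ H} be the diagonal subspace. Then for every x ∈ ⋂_{i=1}^r C_i, writing 𝐱 = (x, x, …, x) ∈ C ∩ D, one has (N_C(𝐱) + N_D(𝐱)) ∩ D = (Σ_{i=1}^r N_{C_i}(x))^r ∩ D, where (Σ_{i=1}^r N_{C_i}(x))^r denotes the r-fold product of the Minkowski sum Σ_{i=1}^r N_{C_i}(x). -/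
open RealInnerProductSpace Pointwise

/-- The normal cone to a convex set `C` at `x` (empty when `x ∉ C`), in any real
inner product space. -/
def normalCone {E : Type*} [NormedAddCommGroup E] [InnerProductSpace ℝ E]
    (C : Set E) (x : E) : Set E :=
  {u | x ∈ C ∧ ∀ c ∈ C, ⟪u, c - x⟫ ≤ 0}

lemma normalCone_smul_mem {E : Type*} [NormedAddCommGroup E] [InnerProductSpace ℝ E]
    {C : Set E} {x u : E} (hu : u ∈ normalCone C x) {t : ℝ} (ht : 0 ≤ t) :
    t • u ∈ normalCone C x := by
  refine ⟨hu.1, fun c hc => ?_⟩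
  rw [real_inner_smul_left]
  exact mul_nonpos_of_nonneg_of_nonpos ht (hu.2 c hc)

/-- In the product Hilbert space `H^r`, with `C = C₁ × ⋯ × C_r` and `D`
the diagonal, for every `x ∈ ⋂ᵢ Cᵢ` (writing `𝐱 = (x,…,x)`):
`(N_C(𝐱) + N_D(𝐱)) ∩ D = (Σᵢ N_{Cᵢ}(x))^r ∩ D`. -/
theorem stmt_19 {H : Type*} [NormedAddCommGroup H] [InnerProductSpace ℝ H] [CompleteSpace H]
    (r : ℕ) (hr : 1 ≤ r) (C : Fin r → Set H)
    (hCne : ∀ i, (C i).Nonempty) (hCc : ∀ i, IsClosed (C i)) (hCv : ∀ i, Convex ℝ (C i))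
    (x : H) (hx : ∀ i, x ∈ C i) :
    (normalCone {f : PiLp 2 (fun _ : Fin r => H) | ∀ i, f i ∈ C i} (WithLp.toLp 2 (fun _ => x)) +
        normalCone {f : PiLp 2 (fun _ : Fin r => H) | ∃ z : H, ∀ i, f i = z} (WithLp.toLp 2 (fun _ => x))) ∩
      {f : PiLp 2 (fun _ : Fin r => H) | ∃ z : H, ∀ i, f i = z} =
    {f : PiLp 2 (fun _ : Fin r => H) |
        ∀ i, f i ∈ {u : H | ∃ d : Fin r → H,
          (∀ j, d j ∈ normalCone (C j) x) ∧ u = ∑ j, d j}} ∩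
      {f : PiLp 2 (fun _ : Fin r => H) | ∃ z : H, ∀ i, f i = z} := by
  have hrne : (r : ℝ) ≠ 0 := by
    exact_mod_cast Nat.one_le_iff_ne_zero.mp hr
  ext f
  simp only [Set.mem_inter_iff, Set.mem_setOf_eq, Set.mem_add]
  constructor
  · rintro ⟨⟨u, hu, v, hv, huv⟩, z, hz⟩
    refine ⟨?_, z, hz⟩
    -- each coordinate of `u` lies in the corresponding normal cone
    have huj : ∀ j, u j ∈ normalCone (C j) x := by
      intro j
      refine ⟨hx j, fun c hc => ?_⟩
      have hmem : (WithLp.toLp 2 (Function.update (fun _ : Fin r => x) j c) :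
          PiLp 2 (fun _ : Fin r => H)) ∈
          {g : PiLp 2 (fun _ : Fin r => H) | ∀ i, g i ∈ C i} := by
        intro k
        rcases eq_or_ne k j with rfl | hk
        · simpa using hc
        · simpa [Function.update_of_ne hk] using hx k
      have h := hu.2 _ hmem
      rw [PiLp.inner_apply] at h
      simp only [PiLp.sub_apply, PiLp.toLp_apply, Function.update_apply] at h
      rw [Finset.sum_eq_single j] at h
      · simpa using h
      · intro k _ hk
        simp [hk]
      · simp
    -- the coordinates of `v` sum to zero
    have hvsum : ∑ j, v j = 0 := by
      have hmem : (WithLp.toLp 2 (fun _ => x + ∑ j, v j) : PiLp 2 (fun _ : Fin r => H)) ∈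
          {g : PiLp 2 (fun _ : Fin r => H) | ∃ z : H, ∀ i, g i = z} :=
        ⟨x + ∑ j, v j, fun _ => rfl⟩
      have h := hv.2 _ hmem
      rw [PiLp.inner_apply] at h
      simp only [PiLp.sub_apply, PiLp.toLp_apply, add_sub_cancel_left] at h
      rw [← sum_inner] at h
      exact real_inner_self_nonpos.mp h
    have hfi : ∀ i : Fin r, u i + v i = z := by
      intro i
      rw [← hz i, ← huv]
      rfl
    have hsum : ∑ j, u j = (r : ℝ) • z := by
      have h1 : ∑ j : Fin r, (u j + v j) = ∑ j : Fin r, z :=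
        Finset.sum_congr rfl fun j _ => hfi j
      rw [Finset.sum_add_distrib, hvsum, add_zero] at h1
      rw [h1, Finset.sum_const, Finset.card_univ, Fintype.card_fin,
        Nat.cast_smul_eq_nsmul]
    have hzval : z = ∑ j, (r : ℝ)⁻¹ • u j := by
      rw [← Finset.smul_sum, hsum, inv_smul_smul₀ hrne]
    intro i
    exact ⟨fun j => (r : ℝ)⁻¹ • u j,
      fun j => normalCone_smul_mem (huj j) (by positivity),
      (hz i).trans hzval⟩
  · rintro ⟨hmem, z, hz⟩
    refine ⟨?_, z, hz⟩
    obtain ⟨d, hd, hzd⟩ := hmem ⟨0, hr⟩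
    rw [hz ⟨0, hr⟩] at hzd
    set u0 : PiLp 2 (fun _ : Fin r => H) := WithLp.toLp 2 (fun i => (r : ℝ) • d i) with hu0
    refine ⟨u0, ⟨fun i => hx i, ?_⟩, f - u0, ⟨⟨x, fun _ => rfl⟩, ?_⟩, by abel⟩
    · intro c hc
      rw [PiLp.inner_apply]
      refine Finset.sum_nonpos fun i _ => ?_
      have h := (normalCone_smul_mem (hd i)
        (Nat.cast_nonneg r : (0 : ℝ) ≤ (r : ℝ))).2 (c i) (hc i)
      simpa [hu0, PiLp.sub_apply] using h
    · rintro c ⟨w, hw⟩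
      set xbar : PiLp 2 (fun _ : Fin r => H) := WithLp.toLp 2 (fun _ => x) with hxbar
      have h1 : ∑ i : Fin r, f i = (r : ℝ) • z := by
        rw [Finset.sum_congr rfl fun i _ => hz i, Finset.sum_const, Finset.card_univ,
          Fintype.card_fin, Nat.cast_smul_eq_nsmul]
      have hsum0 : ∑ i : Fin r, (f i - (r : ℝ) • d i) = 0 := by
        rw [Finset.sum_sub_distrib, ← Finset.smul_sum, h1, ← hzd, sub_self]
      have h2 : ∀ i ∈ Finset.univ,
          (inner ℝ ((f - u0) i) ((c - xbar) i) : ℝ) =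
            ⟪f i - (r : ℝ) • d i, w - x⟫ := by
        intro i _
        simp only [PiLp.sub_apply, hu0, hxbar, PiLp.toLp_apply, hw i]
      have hval : (⟪f - u0, c - xbar⟫ : ℝ) = 0 := by
        rw [PiLp.inner_apply, Finset.sum_congr rfl h2, ← sum_inner, hsum0, inner_zero_left]
      exact le_of_eq hval
end
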